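/- Fix N ≥ 2. Then the instantiation τ_N solves the paper's linear equation system: (A) τ_N(1) = 1 + (if N is odd and (1+N)/2 ∈ P_{2,N} then (1/2)·τ_N((1+N)/2) else 0); and (B) for every i with 1 < i < N and i ∈ P_{2,N}: τ_N(i) = (if i is even and i/2 ∈ P_{2,N} then (1/2)·τ_N(i/2) else 0) + (if i + N is even and (i+N)/2 ∈ P_{2,N} then (1/2)·τ_N((i+N)/2) else 0). -/

import Mathlib

open scoped Classical

/-- `F N i`: the least `k` with `2^k ≡ i (mod N)`, or `∞` if no such `k` exists. -/
noncomputable def F (N i : ℕ) : ℕ∞ :=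
  sInf {k : ℕ∞ | ∃ m : ℕ, k = (m : ℕ∞) ∧ 2 ^ m ≡ i [MOD N]}

/-- `L N i`: the least `l ≥ 1` with `i·2^l ≡ i (mod N)`, or `∞` if no such `l` exists. -/
noncomputable def L (N i : ℕ) : ℕ∞ :=
  sInf {k : ℕ∞ | ∃ l : ℕ, k = (l : ℕ∞) ∧ 1 ≤ l ∧ i * 2 ^ l ≡ i [MOD N]}

/-- `P2 N`: the set of residues of powers of two modulo `N`. -/
def P2 (N : ℕ) : Set ℕ := {i : ℕ | ∃ k : ℕ, 2 ^ k ≡ i [MOD N]}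

/-- The instantiation `τ_N(i) = (1/2)^{F_N(i)} · (1 − (1/2)^{L_N(i)})⁻¹` (with the second
factor equal to `1` when `L_N(i) = ∞`). -/
noncomputable def tau (N i : ℕ) : ℝ :=
  if L N i = ⊤ then (1 / 2 : ℝ) ^ (F N i).toNat
  else (1 / 2 : ℝ) ^ (F N i).toNat * (1 - (1 / 2 : ℝ) ^ (L N i).toNat)⁻¹

/-! ### Auxiliary definitions and lemmas -/

noncomputable def gfun (N i : ℕ) (k : ℕ) : ℝ :=
  if 2 ^ k ≡ i [MOD N] then (1 / 2 : ℝ) ^ k else 0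

lemma summable_of_le_pow (f : ℕ → ℝ) (h0 : ∀ k, 0 ≤ f k)
    (h1 : ∀ k, f k ≤ (1 / 2 : ℝ) ^ k) : Summable f :=
  Summable.of_nonneg_of_le h0 h1
    (summable_geometric_of_lt_one (by norm_num) (by norm_num))

lemma gfun_summable (N i : ℕ) : Summable (gfun N i) := by
  apply summable_of_le_pow
  · intro k; rw [gfun]; split <;> positivity
  · intro k; rw [gfun]; split
    · exact le_refl _
    · positivity

lemma F_eq (N i : ℕ) (h : ∃ k : ℕ, 2 ^ k ≡ i [MOD N]) :
    F N i = (Nat.find h : ℕ∞) := by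
  apply le_antisymm
  · exact sInf_le ⟨Nat.find h, rfl, Nat.find_spec h⟩
  · apply le_sInf
    rintro x ⟨m, rfl, hm⟩
    exact_mod_cast Nat.find_min' h hm

lemma L_eq (N i : ℕ) (h : ∃ l : ℕ, 1 ≤ l ∧ i * 2 ^ l ≡ i [MOD N]) :
    L N i = (Nat.find h : ℕ∞) := by
  apply le_antisymm
  · exact sInf_le ⟨Nat.find h, rfl, Nat.find_spec h⟩
  · apply le_sInf
    rintro x ⟨m, rfl, hm⟩
    exact_mod_cast Nat.find_min' h hm

lemma L_eq_top (N i : ℕ) (h : ¬ ∃ l : ℕ, 1 ≤ l ∧ i * 2 ^ l ≡ i [MOD N]) :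
    L N i = ⊤ := by
  rw [L, sInf_eq_top]
  rintro a ⟨l, rfl, hl⟩
  exact absurd ⟨l, hl⟩ h

/-- The key representation: for `i ∈ P2 N`, `tau N i` is the sum of `(1/2)^k` over all `k`
with `2^k ≡ i (mod N)`. -/
lemma tau_eq_tsum (N i : ℕ) (h' : i ∈ P2 N) :
    tau N i = ∑' k, gfun N i k := by
  have h : ∃ k : ℕ, 2 ^ k ≡ i [MOD N] := h'
  set f := Nat.find h with hf
  have hfspec : 2 ^ f ≡ i [MOD N] := Nat.find_spec h
  by_cases hl : ∃ l : ℕ, 1 ≤ l ∧ i * 2 ^ l ≡ i [MOD N]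
  · set l := Nat.find hl with hldef
    have hl1 : 1 ≤ l := (Nat.find_spec hl).1
    have hper : i * 2 ^ l ≡ i [MOD N] := (Nat.find_spec hl).2
    -- every `d` with `i·2^d ≡ i` is a multiple of `l`
    have key : ∀ d : ℕ, i * 2 ^ d ≡ i [MOD N] → l ∣ d := by
      intro d
      induction d using Nat.strong_induction_on with
      | _ d ih =>
        intro hd
        rcases Nat.eq_zero_or_pos d with h0 | hdpos
        · simp [h0]
        rcases lt_or_ge d l with hdl | hld
        · exact absurd (Nat.find_min' hl ⟨hdpos, hd⟩) (by omega)
        · have hstep : i * 2 ^ (d - l) ≡ i [MOD N] := by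
            have h1 : i * 2 ^ l * 2 ^ (d - l) ≡ i * 2 ^ (d - l) [MOD N] :=
              hper.mul_right _
            have h2 : i * 2 ^ l * 2 ^ (d - l) = i * 2 ^ d := by
              rw [mul_assoc, ← pow_add]
              congr 2
              omega
            rw [h2] at h1
            exact h1.symm.trans hd
          obtain ⟨c, hc⟩ := ih (d - l) (by omega) hstep
          refine ⟨c + 1, ?_⟩
          rw [Nat.mul_add, Nat.mul_one, ← hc]
          omega
    -- characterization of the exponents hitting `i`
    have hchar : ∀ k : ℕ, (2 ^ k ≡ i [MOD N]) ↔ ∃ m : ℕ, k = f + m * l := by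
      intro k
      constructor
      · intro hk
        have hfk : f ≤ k := Nat.find_min' h hk
        have hmem : i * 2 ^ (k - f) ≡ i [MOD N] := by
          have h1 : 2 ^ f * 2 ^ (k - f) ≡ i * 2 ^ (k - f) [MOD N] :=
            hfspec.mul_right _
          have h2 : 2 ^ f * 2 ^ (k - f) = 2 ^ k := by
            rw [← pow_add]; congr 1; omega
          rw [h2] at h1
          exact h1.symm.trans hk
        obtain ⟨m, hm⟩ := key _ hmem
        refine ⟨m, ?_⟩
        rw [Nat.mul_comm m l, ← hm]
        omega
      · rintro ⟨m, rfl⟩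
        induction m with
        | zero => simpa using hfspec
        | succ m ihm =>
          have h1 : 2 ^ (f + m * l) * 2 ^ l ≡ i * 2 ^ l [MOD N] := ihm.mul_right _
          have h2 : 2 ^ (f + m * l) * 2 ^ l = 2 ^ (f + (m + 1) * l) := by
            rw [← pow_add]; congr 1; ring
          rw [h2] at h1
          exact h1.trans hper
    -- compute the sum
    have hinj : Function.Injective (fun m : ℕ => f + m * l) := by
      intro a b hab
      simp only at hab
      exact Nat.eq_of_mul_eq_mul_right (show 0 < l by omega) (by omega : a * l = b * l)
    have hsupp : Function.support (gfun N i) ⊆ Set.range (fun m : ℕ => f + m * l) := by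
      intro k hk
      have hcond : 2 ^ k ≡ i [MOD N] := by
        by_contra hc
        exact hk (by simp [gfun, hc])
      obtain ⟨m, hm⟩ := (hchar k).mp hcond
      exact ⟨m, hm.symm⟩
    have h1 : ∑' m : ℕ, gfun N i (f + m * l) = ∑' k, gfun N i k :=
      hinj.tsum_eq hsupp
    have h2 : ∀ m : ℕ, gfun N i (f + m * l)
        = (1 / 2 : ℝ) ^ f * ((1 / 2 : ℝ) ^ l) ^ m := by
      intro m
      rw [gfun, if_pos ((hchar _).mpr ⟨m, rfl⟩), pow_add, ← pow_mul, mul_comm m l]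
    have hgeo : ∑' m : ℕ, ((1 / 2 : ℝ) ^ l) ^ m = (1 - (1 / 2 : ℝ) ^ l)⁻¹ := by
      apply tsum_geometric_of_lt_one (by positivity)
      calc (1 / 2 : ℝ) ^ l ≤ (1 / 2 : ℝ) ^ 1 :=
            pow_le_pow_of_le_one (by norm_num) (by norm_num) hl1
        _ < 1 := by norm_num
    rw [← h1]
    simp_rw [h2]
    rw [tsum_mul_left, hgeo]
    rw [tau, L_eq N i hl, F_eq N i h]
    simp [← hldef, ← hf]
  · -- aperiodic case: the exponent is unique
    have huniq : ∀ k : ℕ, (2 ^ k ≡ i [MOD N]) ↔ k = f := by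
      intro k
      constructor
      · intro hk
        have hfk : f ≤ k := Nat.find_min' h hk
        by_contra hne
        apply hl
        refine ⟨k - f, by omega, ?_⟩
        have h1 : 2 ^ f * 2 ^ (k - f) ≡ i * 2 ^ (k - f) [MOD N] := hfspec.mul_right _
        have h2 : 2 ^ f * 2 ^ (k - f) = 2 ^ k := by rw [← pow_add]; congr 1; omega
        rw [h2] at h1
        exact h1.symm.trans hk
      · rintro rfl; exact hfspec
    have hpt : ∀ k, gfun N i k = if k = f then (1 / 2 : ℝ) ^ f else 0 := by
      intro k
      rw [gfun]
      by_cases hk : k = f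
      · rw [if_pos ((huniq k).mpr hk), if_pos hk, hk]
      · rw [if_neg (fun hc => hk ((huniq k).mp hc)), if_neg hk]
    simp_rw [hpt]
    rw [tsum_ite_eq, tau, L_eq_top N i hl, if_pos rfl, F_eq N i h]
    simp [← hf]

/-- The pointwise step identity. -/
lemma step_eq (N i : ℕ) (hN : 2 ≤ N) (hiN : i < N) (k : ℕ) :
    gfun N i (k + 1) =
      (1 / 2 : ℝ) * (if Even i ∧ 2 ^ k ≡ i / 2 [MOD N] then (1 / 2 : ℝ) ^ k else 0) +
      (1 / 2 : ℝ) * (if Even (i + N) ∧ 2 ^ k ≡ (i + N) / 2 [MOD N] then (1 / 2 : ℝ) ^ k else 0) := by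
  rw [gfun]
  by_cases hk : 2 ^ (k + 1) ≡ i [MOD N]
  · set j := 2 ^ k % N with hj
    have hjN : j < N := Nat.mod_lt _ (by omega)
    have hjc : 2 ^ k ≡ j [MOD N] := (Nat.mod_modEq _ _).symm
    have hmod : (2 * j) % N = i := by
      have h1 : 2 * j ≡ 2 * 2 ^ k [MOD N] := (Nat.mod_modEq _ _).mul_left 2
      have h2 : 2 * 2 ^ k ≡ i [MOD N] := by
        have he : 2 * 2 ^ k = 2 ^ (k + 1) := by ring
        rw [he]; exact hk
      have h3 : (2 * j) % N = i % N := h1.trans h2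
      rwa [Nat.mod_eq_of_lt hiN] at h3
    have h2j : 2 * j = i ∨ 2 * j = i + N := by
      rcases lt_or_ge (2 * j) N with hlt | hge
      · left; rwa [Nat.mod_eq_of_lt hlt] at hmod
      · right
        have : (2 * j) % N = 2 * j - N := by
          rw [Nat.mod_eq_sub_mod hge, Nat.mod_eq_of_lt (by omega)]
        omega
    rw [if_pos hk]
    rcases h2j with hcase | hcase
    · have hEi : Even i := ⟨j, by omega⟩
      have hb1 : 2 ^ k ≡ i / 2 [MOD N] := by
        have he : i / 2 = j := by omega
        rwa [he]
      have hnb2 : ¬(Even (i + N) ∧ 2 ^ k ≡ (i + N) / 2 [MOD N]) := by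
        rintro ⟨hE2, hc⟩
        have h2' : (i + N) / 2 < N := by omega
        have h3 : j % N = ((i + N) / 2) % N := hjc.symm.trans hc
        rw [Nat.mod_eq_of_lt hjN, Nat.mod_eq_of_lt h2'] at h3
        obtain ⟨t, ht⟩ := hE2
        omega
      rw [if_pos ⟨hEi, hb1⟩, if_neg hnb2, pow_succ]
      ring
    · have hEi : Even (i + N) := ⟨j, by omega⟩
      have hb2 : 2 ^ k ≡ (i + N) / 2 [MOD N] := by
        have he : (i + N) / 2 = j := by omega
        rwa [he]
      have hnb1 : ¬(Even i ∧ 2 ^ k ≡ i / 2 [MOD N]) := by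
        rintro ⟨hE1, hc⟩
        have h2' : i / 2 < N := by omega
        have h3 : j % N = (i / 2) % N := hjc.symm.trans hc
        rw [Nat.mod_eq_of_lt hjN, Nat.mod_eq_of_lt h2'] at h3
        obtain ⟨t, ht⟩ := hE1
        omega
      rw [if_neg hnb1, if_pos ⟨hEi, hb2⟩, pow_succ]
      ring
  · rw [if_neg hk]
    have hnb1 : ¬(Even i ∧ 2 ^ k ≡ i / 2 [MOD N]) := by
      rintro ⟨hE, hc⟩
      apply hk
      have h1 : 2 * 2 ^ k ≡ 2 * (i / 2) [MOD N] := hc.mul_left 2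
      obtain ⟨t, ht⟩ := hE
      have h2 : 2 * (i / 2) = i := by omega
      have h3 : 2 * 2 ^ k = 2 ^ (k + 1) := by ring
      rwa [h2, h3] at h1
    have hnb2 : ¬(Even (i + N) ∧ 2 ^ k ≡ (i + N) / 2 [MOD N]) := by
      rintro ⟨hE, hc⟩
      apply hk
      have h1 : 2 * 2 ^ k ≡ 2 * ((i + N) / 2) [MOD N] := hc.mul_left 2
      obtain ⟨t, ht⟩ := hE
      have h2 : 2 * ((i + N) / 2) = i + N := by omega
      have h3 : 2 * 2 ^ k = 2 ^ (k + 1) := by ring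
      rw [h2, h3] at h1
      exact h1.trans (Nat.add_mod_right i N)
    rw [if_neg hnb1, if_neg hnb2]
    ring

/-- Evaluate a branch sum. -/
lemma branch_eq (N j : ℕ) (E : Prop) [Decidable E]
    [∀ k : ℕ, Decidable (E ∧ 2 ^ k ≡ j [MOD N])] [Decidable (E ∧ j ∈ P2 N)] :
    (∑' k : ℕ, if E ∧ 2 ^ k ≡ j [MOD N] then (1 / 2 : ℝ) ^ k else 0) =
      if E ∧ j ∈ P2 N then tau N j else 0 := by
  by_cases hE : E
  · by_cases hj : j ∈ P2 N
    · rw [if_pos ⟨hE, hj⟩, tau_eq_tsum N j hj]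
      exact tsum_congr fun k => by by_cases hc : 2 ^ k ≡ j [MOD N] <;> simp [gfun, hE, hc]
    · rw [if_neg (fun hc => hj hc.2)]
      have hz : ∀ k : ℕ, (if E ∧ 2 ^ k ≡ j [MOD N] then (1 / 2 : ℝ) ^ k else 0) = 0 := by
        intro k
        rw [if_neg]
        rintro ⟨-, hc⟩
        exact hj ⟨k, hc⟩
      simp_rw [hz]
      exact tsum_zero
  · rw [if_neg (fun hc => hE hc.1)]
    have hz : ∀ k : ℕ, (if E ∧ 2 ^ k ≡ j [MOD N] then (1 / 2 : ℝ) ^ k else 0) = 0 := by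
      intro k
      rw [if_neg]
      rintro ⟨hc, -⟩
      exact hE hc
    simp_rw [hz]
    exact tsum_zero

/-- The recurrence satisfied by `tau`. -/
lemma tau_rec (N i : ℕ) (hN : 2 ≤ N) (hiN : i < N) (hP : i ∈ P2 N) :
    tau N i = (if 2 ^ 0 ≡ i [MOD N] then (1 : ℝ) else 0) +
      ((if Even i ∧ i / 2 ∈ P2 N then (1 / 2 : ℝ) * tau N (i / 2) else 0) +
       (if Even (i + N) ∧ (i + N) / 2 ∈ P2 N then (1 / 2 : ℝ) * tau N ((i + N) / 2) else 0)) := by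
  have hg0 : gfun N i 0 = (if 2 ^ 0 ≡ i [MOD N] then (1 : ℝ) else 0) := by
    rw [gfun]
    by_cases hc : 2 ^ 0 ≡ i [MOD N] <;> simp [hc]
  have hsum1 : Summable (fun k : ℕ =>
      (if Even i ∧ 2 ^ k ≡ i / 2 [MOD N] then (1 / 2 : ℝ) ^ k else 0)) := by
    apply summable_of_le_pow
    · intro k; split <;> positivity
    · intro k; split
      · exact le_refl _
      · positivity
  have hsum2 : Summable (fun k : ℕ =>
      (if Even (i + N) ∧ 2 ^ k ≡ (i + N) / 2 [MOD N] then (1 / 2 : ℝ) ^ k else 0)) := by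
    apply summable_of_le_pow
    · intro k; split <;> positivity
    · intro k; split
      · exact le_refl _
      · positivity
  have tail : (∑' k : ℕ, gfun N i (k + 1))
      = (if Even i ∧ i / 2 ∈ P2 N then (1 / 2 : ℝ) * tau N (i / 2) else 0) +
        (if Even (i + N) ∧ (i + N) / 2 ∈ P2 N then (1 / 2 : ℝ) * tau N ((i + N) / 2) else 0) := by
    have e1 : (∑' k : ℕ, gfun N i (k + 1))
        = (1 / 2 : ℝ) * (∑' k : ℕ, (if Even i ∧ 2 ^ k ≡ i / 2 [MOD N] then (1 / 2 : ℝ) ^ k else 0)) +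
          (1 / 2 : ℝ) * (∑' k : ℕ, (if Even (i + N) ∧ 2 ^ k ≡ (i + N) / 2 [MOD N] then (1 / 2 : ℝ) ^ k else 0)) := by
      rw [tsum_congr (step_eq N i hN hiN),
        Summable.tsum_add (hsum1.mul_left _) (hsum2.mul_left _), tsum_mul_left, tsum_mul_left]
    rw [e1, branch_eq N (i / 2) (Even i), branch_eq N ((i + N) / 2) (Even (i + N))]
    by_cases h1 : Even i ∧ i / 2 ∈ P2 N <;>
      by_cases h2 : Even (i + N) ∧ (i + N) / 2 ∈ P2 N <;>
      simp [h1, h2]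
  rw [tau_eq_tsum N i hP, Summable.tsum_eq_zero_add (gfun_summable N i), hg0, tail]

/-- `τ_N` solves the linear equation system of the Fast Dice Roller invariant. -/
theorem tau_solves_equations (N : ℕ) (hN : 2 ≤ N) :
    (tau N 1 =
      1 + (if Odd N ∧ (1 + N) / 2 ∈ P2 N then (1 / 2 : ℝ) * tau N ((1 + N) / 2) else 0)) ∧
    (∀ i : ℕ, 1 < i → i < N → i ∈ P2 N →
      tau N i =
        (if Even i ∧ i / 2 ∈ P2 N then (1 / 2 : ℝ) * tau N (i / 2) else 0) +
        (if Even (i + N) ∧ (i + N) / 2 ∈ P2 N then (1 / 2 : ℝ) * tau N ((i + N) / 2) else 0)) := by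
  constructor
  · have h1P : (1 : ℕ) ∈ P2 N := ⟨0, by simp [Nat.ModEq]⟩
    rw [tau_rec N 1 hN (by omega) h1P]
    have hc0 : 2 ^ 0 ≡ 1 [MOD N] := by simp [Nat.ModEq]
    rw [if_pos hc0]
    have hne : ¬(Even 1 ∧ 1 / 2 ∈ P2 N) := by
      rintro ⟨hE, -⟩
      exact (Nat.not_even_iff_odd.mpr odd_one) hE
    rw [if_neg hne, zero_add]
    congr 1
    have hiff : (Even (1 + N) ∧ (1 + N) / 2 ∈ P2 N) ↔ (Odd N ∧ (1 + N) / 2 ∈ P2 N) := by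
      constructor
      · rintro ⟨hE, hP⟩
        refine ⟨?_, hP⟩
        rcases Nat.even_or_odd N with h | h
        · exfalso
          obtain ⟨t, ht⟩ := hE
          obtain ⟨s, hs⟩ := h
          omega
        · exact h
      · rintro ⟨hO, hP⟩
        obtain ⟨t, ht⟩ := hO
        exact ⟨⟨t + 1, by omega⟩, hP⟩
    exact if_congr hiff rfl rfl
  · intro i hi1 hiN hP
    rw [tau_rec N i hN hiN hP]
    have hc0 : ¬ 2 ^ 0 ≡ i [MOD N] := by
      intro hc
      have h1 : (1 : ℕ) % N = i % N := hc
      rw [Nat.mod_eq_of_lt (by omega : 1 < N), Nat.mod_eq_of_lt hiN] at h1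
      omega
    rw [if_neg hc0, zero_add]
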